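/- arXiv:1308.4260 — 2 statements merged into one kernel-verified Lean document; each statement's English description precedes it below -/
import Mathlib

section
/- Let S be a biextendable set over a finite alphabet A such that every word of S is left-extendable by a letter. Let w in S and U, V ⊆ S, and let ℓ in S \ U be such that ℓw in S and Aℓ ∩ S ⊆ U. Set U' = (U \ Aℓ) ∪ {ℓ}. If the generalized extension graphs E_{U',V}(w) and E_{A,V}(ℓw) are both connected, then E_{U,V}(w) is connected. -/
open List

/-- `u` is a factor of `v`. -/
def IsFactor {A : Type*} (u v : List A) : Prop := ∃ p s : List A, v = p ++ u ++ s

/-- A set of words is factorial if it contains the factors of its elements. -/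
def Factorial {A : Type*} (S : Set (List A)) : Prop :=
  ∀ v ∈ S, ∀ u : List A, IsFactor u v → u ∈ S

/-- Left extensions of `w` in `S` taken inside the set `U`. -/
def leftExts {A : Type*} (S U : Set (List A)) (w : List A) : Set (List A) :=
  {l | l ∈ U ∧ l ++ w ∈ S}

/-- Right extensions of `w` in `S` taken inside the set `V`. -/
def rightExts {A : Type*} (S V : Set (List A)) (w : List A) : Set (List A) :=
  {r | r ∈ V ∧ w ++ r ∈ S}

/-- The generalized extension graph `E_{U,V}(w)`: a bipartite undirected graph on the
disjoint union of `U(w)` and `V(w)`, with an edge between `l` and `r` iff `l ++ w ++ r ∈ S`. -/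
def ExtGraph {A : Type*} (S U V : Set (List A)) (w : List A) :
    SimpleGraph (↥(leftExts S U w) ⊕ ↥(rightExts S V w)) where
  Adj x y :=
    (∃ l r, x = Sum.inl l ∧ y = Sum.inr r ∧ l.val ++ w ++ r.val ∈ S) ∨
    (∃ l r, x = Sum.inr r ∧ y = Sum.inl l ∧ l.val ++ w ++ r.val ∈ S)
  symm := by
    refine ⟨?_⟩
    rintro x y (⟨l, r, hx, hy, h⟩ | ⟨l, r, hx, hy, h⟩)
    · exact Or.inr ⟨l, r, hy, hx, h⟩
    · exact Or.inl ⟨l, r, hy, hx, h⟩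
  loopless := by
    refine ⟨?_⟩
    rintro x (⟨l, r, hx, hy, _⟩ | ⟨l, r, hx, hy, _⟩) <;> subst hx <;> simp at hy

/-- The set of one-letter words. -/
def letterWords (A : Type*) : Set (List A) := Set.range fun a : A => [a]

/-- The extension graph `E(w)` of `w` in `S` (extensions by letters). -/
def EGraph {A : Type*} (S : Set (List A)) (w : List A) :=
  ExtGraph S (letterWords A) (letterWords A) w

/-- `S` is biextendable: factorial and every word extends on both sides by a letter. -/
def Biext {A : Type*} (S : Set (List A)) : Prop :=
  Factorial S ∧ ∀ w ∈ S, ∃ a b : A, a :: (w ++ [b]) ∈ S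

/-- `S` is an acyclic set. -/
def SAcyclic {A : Type*} (S : Set (List A)) : Prop :=
  Biext S ∧ ∀ w ∈ S, (EGraph S w).IsAcyclic

/-- `S` is a connected set. -/
def SConn {A : Type*} (S : Set (List A)) : Prop :=
  Biext S ∧ ∀ w ∈ S, (EGraph S w).Connected

/-- `S` is a tree set. -/
def STree {A : Type*} (S : Set (List A)) : Prop :=
  Biext S ∧ ∀ w ∈ S, (EGraph S w).IsTree

/-- A prefix code: nonempty words, none a proper prefix of another. -/
def IsPrefixCode {A : Type*} (X : Set (List A)) : Prop :=
  (∀ x ∈ X, x ≠ []) ∧ ∀ x ∈ X, ∀ y ∈ X, x <+: y → x = y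

/-- A suffix code: nonempty words, none a proper suffix of another. -/
def IsSuffixCode {A : Type*} (X : Set (List A)) : Prop :=
  (∀ x ∈ X, x ≠ []) ∧ ∀ x ∈ X, ∀ y ∈ X, x <:+ y → x = y

/-- A bifix code. -/
def IsBifixCode {A : Type*} (X : Set (List A)) : Prop :=
  IsPrefixCode X ∧ IsSuffixCode X

/-- An `S`-maximal prefix code. -/
def IsSMaxPrefixCode {A : Type*} (S X : Set (List A)) : Prop :=
  IsPrefixCode X ∧ X ⊆ S ∧ ∀ Y : Set (List A), IsPrefixCode Y → Y ⊆ S → X ⊆ Y → X = Y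

/-- An `S`-maximal suffix code. -/
def IsSMaxSuffixCode {A : Type*} (S X : Set (List A)) : Prop :=
  IsSuffixCode X ∧ X ⊆ S ∧ ∀ Y : Set (List A), IsSuffixCode Y → Y ⊆ S → X ⊆ Y → X = Y

/-- An `S`-maximal bifix code. -/
def IsSMaxBifixCode {A : Type*} (S X : Set (List A)) : Prop :=
  IsBifixCode X ∧ X ⊆ S ∧ ∀ Y : Set (List A), IsBifixCode Y → Y ⊆ S → X ⊆ Y → X = Y

/-- The canonical embedding of words over `A` into the free group `F_A`. -/
def toFG {A : Type*} (w : List A) : FreeGroup A := (w.map FreeGroup.of).prod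

/-- A subset of a group is free if it is a basis of the subgroup it generates, i.e. the
induced morphism from the free group over it is injective. -/
def IsFreeSubset {G : Type*} [Group G] (X : Set G) : Prop :=
  Function.Injective ⇑(FreeGroup.lift fun x : X => (x : G))

/-- The submonoid `X*` of `A*` generated by `X`, as a set of words. -/
def star {A : Type*} (X : Set (List A)) : Set (List A) :=
  {w | ∃ l : List (List A), (∀ u ∈ l, u ∈ X) ∧ w = l.flatten}

/-- Every word of `S` is right-extendable by a letter. -/
def RightExtendable {A : Type*} (S : Set (List A)) : Prop :=
  ∀ w ∈ S, ∃ a : A, w ++ [a] ∈ S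

/-- `S` is uniformly recurrent. -/
def UnifRecurrent {A : Type*} (S : Set (List A)) : Prop :=
  RightExtendable S ∧
    ∀ u ∈ S, ∃ n : ℕ, 1 ≤ n ∧ ∀ v ∈ S, v.length = n → IsFactor u v

/-- `S` is recurrent. -/
def Recurrent {A : Type*} (S : Set (List A)) : Prop :=
  S ≠ {([] : List A)} ∧ Factorial S ∧ ∀ u ∈ S, ∀ w ∈ S, ∃ v ∈ S, u ++ v ++ w ∈ S

/-- The set `Γ_S(w)` of right return words to `w`. -/
def retWords {A : Type*} (S : Set (List A)) (w : List A) : Set (List A) :=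
  {x | x ∈ S ∧ w ++ x ∈ S ∧ ∃ y : List A, y ≠ [] ∧ w ++ x = y ++ w}

/-- The set `R_S(w)` of first right return words to `w`. -/
def firstRet {A : Type*} (S : Set (List A)) (w : List A) : Set (List A) :=
  {x | x ∈ retWords S w ∧ ¬ ∃ y ∈ retWords S w, ∃ z : List A, z ≠ [] ∧ x = y ++ z}

/-- The quantity `m(w) = e(w) - l(w) - r(w) + 1`. -/
noncomputable def mval {A : Type*} (S : Set (List A)) (w : List A) : ℤ :=
  (Set.ncard {p : A × A | p.1 :: (w ++ [p.2]) ∈ S} : ℤ)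
    - (Set.ncard {a : A | a :: w ∈ S} : ℤ) - (Set.ncard {b : A | w ++ [b] ∈ S} : ℤ) + 1

/-- A strong set: factorial and every word is strong or neutral. -/
def SStrong {A : Type*} (S : Set (List A)) : Prop :=
  Factorial S ∧ ∀ w ∈ S, 0 ≤ mval S w

/-- A weak set: factorial and every word is weak or neutral. -/
def SWeak {A : Type*} (S : Set (List A)) : Prop :=
  Factorial S ∧ ∀ w ∈ S, mval S w ≤ 0

/-- A neutral set: factorial and every word is neutral. -/
def SNeutral {A : Type*} (S : Set (List A)) : Prop :=
  Factorial S ∧ ∀ w ∈ S, mval S w = 0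


/-- Lift reachability along a map that sends edges to reachable pairs. -/
lemma reach_lift {V W : Type*} {G : SimpleGraph V} {H : SimpleGraph W} (f : V → W)
    (h : ∀ a b, G.Adj a b → H.Reachable (f a) (f b)) {x y : V}
    (hxy : G.Reachable x y) : H.Reachable (f x) (f y) := by
  obtain ⟨p⟩ := hxy
  induction p with
  | nil => exact SimpleGraph.Reachable.refl _
  | cons h' p ih => exact (h _ _ h').trans ih

/-- If `E_{U',V}(w)` and `E_{A,V}(ℓw)` are connected, where `U' = (U \ Aℓ) ∪ {ℓ}` and
`Aℓ ∩ S ⊆ U`, then `E_{U,V}(w)` is connected. -/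
theorem statement12 {A : Type*} [Fintype A] (S : Set (List A)) (hS : Biext S)
    (hle : ∀ u ∈ S, ∃ a : A, a :: u ∈ S)
    (w : List A) (hw : w ∈ S) (U V : Set (List A)) (hUS : U ⊆ S) (hVS : V ⊆ S)
    (l : List A) (hl : l ∈ S) (hlU : l ∉ U) (hlw : l ++ w ∈ S)
    (hAl : ∀ a : A, a :: l ∈ S → a :: l ∈ U)
    (h1 : (ExtGraph S ((U \ {u | ∃ a : A, u = a :: l}) ∪ {l}) V w).Connected)
    (h2 : (ExtGraph S (letterWords A) V (l ++ w)).Connected) :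
    (ExtGraph S U V w).Connected := by
  classical
  have hfac := hS.1
  have memS_wr : ∀ r : List A, (l ++ w) ++ r ∈ S → w ++ r ∈ S := fun r h =>
    hfac _ h _ ⟨l, [], by simp⟩
  have memS_ul : ∀ u : List A, (u ++ l) ++ w ∈ S → u ++ l ∈ S := fun u h =>
    hfac _ h _ ⟨[], w, by simp⟩
  have f2lmem : ∀ x : ↥(leftExts S (letterWords A) (l ++ w)),
      x.val ++ l ∈ leftExts S U w := by
    rintro ⟨u, ⟨a, rfl⟩, hu⟩
    have h1' : ([a] ++ l) ++ w ∈ S := by simpa [List.append_assoc] using hu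
    have h2' : a :: l ∈ S := by simpa using memS_ul [a] h1'
    exact ⟨by simpa using hAl a h2', h1'⟩
  let f2 : (↥(leftExts S (letterWords A) (l ++ w)) ⊕ ↥(rightExts S V (l ++ w))) →
      (↥(leftExts S U w) ⊕ ↥(rightExts S V w)) := fun x =>
    match x with
    | Sum.inl u => Sum.inl ⟨u.val ++ l, f2lmem u⟩
    | Sum.inr r => Sum.inr ⟨r.val, r.2.1, memS_wr r.val r.2.2⟩
  have f2adj : ∀ x y, (ExtGraph S (letterWords A) V (l ++ w)).Adj x y →
      (ExtGraph S U V w).Adj (f2 x) (f2 y) := by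
    rintro x y (⟨u, r, rfl, rfl, h⟩ | ⟨u, r, rfl, rfl, h⟩)
    · exact Or.inl ⟨_, _, rfl, rfl, by simpa [List.append_assoc] using h⟩
    · exact Or.inr ⟨_, _, rfl, rfl, by simpa [List.append_assoc] using h⟩
  have hreach2 : ∀ x y, (ExtGraph S U V w).Reachable (f2 x) (f2 y) :=
    fun x y => reach_lift f2 (fun a b h => (f2adj a b h).reachable) (h2.preconnected x y)
  obtain ⟨v0'⟩ := h2.nonempty
  set v0 := f2 v0' with hv0
  have f1mem : ∀ u : List A, u ∈ (U \ {u | ∃ a : A, u = a :: l}) ∪ {l} → u ≠ l → u ∈ U := by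
    rintro u hu hne
    rcases hu with ⟨hU, -⟩ | h
    · exact hU
    · exact absurd h hne
  let f1 : (↥(leftExts S ((U \ {u | ∃ a : A, u = a :: l}) ∪ {l}) w) ⊕ ↥(rightExts S V w)) →
      (↥(leftExts S U w) ⊕ ↥(rightExts S V w)) := fun x =>
    match x with
    | Sum.inl u =>
      if h : u.val = l then v0 else Sum.inl ⟨u.val, f1mem u.val u.2.1 h, u.2.2⟩
    | Sum.inr r => Sum.inr r
  have f1key : ∀ (u : ↥(leftExts S ((U \ {u | ∃ a : A, u = a :: l}) ∪ {l}) w))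
      (r : ↥(rightExts S V w)), (u.val ++ w) ++ r.val ∈ S →
      (ExtGraph S U V w).Reachable (f1 (Sum.inl u)) (f1 (Sum.inr r)) := by
    intro u r h
    by_cases hc : u.val = l
    · have hr2 : r.val ∈ rightExts S V (l ++ w) := ⟨r.2.1, by rw [hc] at h; exact h⟩
      have := hreach2 v0' (Sum.inr ⟨r.val, hr2⟩)
      have he1 : f1 (Sum.inl u) = v0 := by simp only [f1, dif_pos hc]
      have he2 : f2 (Sum.inr ⟨r.val, hr2⟩) = f1 (Sum.inr r) := by
        simp only [f1, f2]
      rw [he1, ← he2]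
      exact this
    · have he1 : f1 (Sum.inl u) = Sum.inl ⟨u.val, f1mem u.val u.2.1 hc, u.2.2⟩ := by
        simp only [f1, dif_neg hc]
      have he2 : f1 (Sum.inr r) = Sum.inr r := rfl
      rw [he1, he2]
      exact SimpleGraph.Adj.reachable (Or.inl ⟨_, _, rfl, rfl, h⟩)
  have f1adj : ∀ x y, (ExtGraph S ((U \ {u | ∃ a : A, u = a :: l}) ∪ {l}) V w).Adj x y →
      (ExtGraph S U V w).Reachable (f1 x) (f1 y) := by
    rintro x y (⟨u, r, rfl, rfl, h⟩ | ⟨u, r, rfl, rfl, h⟩)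
    · exact f1key u r h
    · exact (f1key u r h).symm
  have hreach1 : ∀ x y, (ExtGraph S U V w).Reachable (f1 x) (f1 y) :=
    fun x y => reach_lift f1 f1adj (h1.preconnected x y)
  have hlmem : l ∈ leftExts S ((U \ {u | ∃ a : A, u = a :: l}) ∪ {l}) w :=
    ⟨Or.inr rfl, hlw⟩
  have hf1l : f1 (Sum.inl ⟨l, hlmem⟩) = v0 := by simp only [f1, dif_pos]
  have key : ∀ z, (ExtGraph S U V w).Reachable z v0 := by
    rintro (⟨u, huU, huw⟩ | r)
    · by_cases hc : ∃ a : A, u = a :: l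
      · obtain ⟨a, rfl⟩ := hc
        have hx2 : [a] ∈ leftExts S (letterWords A) (l ++ w) :=
          ⟨⟨a, rfl⟩, by simpa [List.append_assoc] using huw⟩
        have hr := hreach2 (Sum.inl ⟨[a], hx2⟩) v0'
        have he : f2 (Sum.inl ⟨[a], hx2⟩) = Sum.inl ⟨a :: l, huU, huw⟩ := by
          simp only [f2]
          exact congrArg Sum.inl (Subtype.ext rfl)
        rwa [he] at hr
      · have hz1 : u ∈ leftExts S ((U \ {u | ∃ a : A, u = a :: l}) ∪ {l}) w :=
          ⟨Or.inl ⟨huU, hc⟩, huw⟩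
        have hr := hreach1 (Sum.inl ⟨u, hz1⟩) (Sum.inl ⟨l, hlmem⟩)
        have hne : u ≠ l := fun h => hlU (h ▸ huU)
        have he : f1 (Sum.inl ⟨u, hz1⟩) = Sum.inl ⟨u, huU, huw⟩ := by
          simp only [f1, dif_neg hne]
        rwa [he, hf1l] at hr
    · have hr := hreach1 (Sum.inr r) (Sum.inl ⟨l, hlmem⟩)
      rwa [hf1l] at hr
  haveI : Nonempty (↥(leftExts S U w) ⊕ ↥(rightExts S V w)) := ⟨v0⟩
  exact ⟨fun x y => (key x).trans (key y).symm⟩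
end

section
/- Let S be a connected set over a finite alphabet A. For each n ≥ 1, the quotient of the Rauzy graph G_n(S) by the equivalence θ_n is isomorphic, as a labeled graph, to G_{n−1}(S). -/
open List

/-- Edge of the Rauzy graph `G_n(S)`: `(x, a, y)` with `xa ∈ S ∩ Ay`. -/
def RauzyAdj {A : Type*} (S : Set (List A)) (n : ℕ) (x : List A) (a : A) (y : List A) : Prop :=
  x ∈ S ∧ x.length = n ∧ y ∈ S ∧ y.length = n ∧ x ++ [a] ∈ S ∧ ∃ b : A, x ++ [a] = b :: y

/-- The base relation of `θ_n`: `ax θ bx` when `a` and `b` are joined by a path in the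
extension graph `E(x)` (both viewed in the left copy). -/
def thetaBase {A : Type*} (S : Set (List A)) (n : ℕ)
    (u v : {x : List A // x ∈ S ∧ x.length = n}) : Prop :=
  ∃ (x : List A) (a b : A) (ha : [a] ∈ leftExts S (letterWords A) x)
    (hb : [b] ∈ leftExts S (letterWords A) x),
      u.val = a :: x ∧ v.val = b :: x ∧
      (EGraph S x).Reachable (Sum.inl ⟨[a], ha⟩) (Sum.inl ⟨[b], hb⟩)

/-- The equivalence `θ_n` on the vertices of `G_n(S)`. -/
def thetaSetoid {A : Type*} (S : Set (List A)) (n : ℕ) :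
    Setoid {x : List A // x ∈ S ∧ x.length = n} :=
  Relation.EqvGen.setoid (thetaBase S n)

lemma tail_mem {A : Type*} {S : Set (List A)} (hF : Factorial S) {u : List A} (hu : u ∈ S) :
    u.tail ∈ S := by
  apply hF u hu
  cases u with
  | nil => exact ⟨[], [], rfl⟩
  | cons a t => exact ⟨[a], [], by simp⟩

lemma theta_of_tail_eq {A : Type*} (S : Set (List A)) (hS : SConn S) {n : ℕ} (hn : 1 ≤ n)
    (u v : {x : List A // x ∈ S ∧ x.length = n}) (h : u.val.tail = v.val.tail) :
    thetaBase S n u v := by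
  obtain ⟨hu, hul⟩ := u.2
  obtain ⟨hv, hvl⟩ := v.2
  have hune : u.val ≠ [] := by intro he; rw [he] at hul; simp at hul; omega
  have hvne : v.val ≠ [] := by intro he; rw [he] at hvl; simp at hvl; omega
  obtain ⟨a, t, hu'⟩ := List.exists_cons_of_ne_nil hune
  obtain ⟨b, s, hv'⟩ := List.exists_cons_of_ne_nil hvne
  have hts : t = s := by rw [hu', hv'] at h; simpa using h
  subst hts
  have htS : t ∈ S := by
    have := tail_mem hS.1.1 hu
    rw [hu'] at this; simpa using this
  have ha : [a] ∈ leftExts S (letterWords A) t :=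
    ⟨⟨a, rfl⟩, by rw [List.singleton_append, ← hu']; exact hu⟩
  have hb : [b] ∈ leftExts S (letterWords A) t :=
    ⟨⟨b, rfl⟩, by rw [List.singleton_append, ← hv']; exact hv⟩
  exact ⟨t, a, b, ha, hb, hu', hv',
    (hS.2 t htS).preconnected (Sum.inl ⟨[a], ha⟩) (Sum.inl ⟨[b], hb⟩)⟩

lemma tail_eq_of_theta {A : Type*} {S : Set (List A)} {n : ℕ}
    {u v : {x : List A // x ∈ S ∧ x.length = n}}
    (h : (thetaSetoid S n).r u v) : u.val.tail = v.val.tail := by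
  have h' : Relation.EqvGen (thetaBase S n) u v := h
  clear h
  induction h' with
  | rel u v huv => obtain ⟨x, a, b, _, _, hu', hv', _⟩ := huv; simp [hu', hv']
  | refl => rfl
  | symm _ _ _ ih => exact ih.symm
  | trans _ _ _ _ _ ih1 ih2 => exact ih1.trans ih2

/-- For a connected set `S`, the quotient of the Rauzy graph `G_n(S)` by the equivalence
`θ_n` is isomorphic, as a labeled graph, to `G_{n-1}(S)`. -/
theorem statement15 {A : Type*} [Fintype A] (S : Set (List A)) (hS : SConn S)
    (n : ℕ) (hn : 1 ≤ n) :
    ∃ φ : Quotient (thetaSetoid S n) ≃ {y : List A // y ∈ S ∧ y.length = n - 1},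
      ∀ (c d : Quotient (thetaSetoid S n)) (a : A),
        (∃ u v, Quotient.mk (thetaSetoid S n) u = c ∧
            Quotient.mk (thetaSetoid S n) v = d ∧ RauzyAdj S n u.val a v.val)
          ↔ RauzyAdj S (n - 1) (φ c).val a (φ d).val := by
  have hF : Factorial S := hS.1.1
  let f : {x : List A // x ∈ S ∧ x.length = n} → {y : List A // y ∈ S ∧ y.length = n - 1} :=
    fun u => ⟨u.val.tail, tail_mem hF u.2.1, by rw [List.length_tail, u.2.2]⟩
  have hresp : ∀ u v, (thetaSetoid S n).r u v → f u = f v := fun u v h =>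
    Subtype.ext (tail_eq_of_theta h)
  let φ' : Quotient (thetaSetoid S n) → {y : List A // y ∈ S ∧ y.length = n - 1} :=
    Quotient.lift f hresp
  have hinj : Function.Injective φ' := by
    intro c d h
    induction c using Quotient.ind with | _ u =>
    induction d using Quotient.ind with | _ v =>
    exact Quotient.sound (Relation.EqvGen.rel _ _
      (theta_of_tail_eq S hS hn u v (congrArg Subtype.val h)))
  have hsurj : Function.Surjective φ' := by
    intro y
    obtain ⟨hyS, hyl⟩ := y.2
    obtain ⟨e, b, heb⟩ := hS.1.2 y.val hyS
    have hey : e :: y.val ∈ S := hF _ heb _ ⟨[], [b], by simp⟩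
    refine ⟨Quotient.mk _ ⟨e :: y.val, hey, by simp [hyl]; omega⟩, ?_⟩
    exact Subtype.ext rfl
  refine ⟨Equiv.ofBijective φ' ⟨hinj, hsurj⟩, ?_⟩
  intro c d a
  constructor
  · rintro ⟨u, v, hc, hd, hadj⟩
    subst hc; subst hd
    obtain ⟨huS, hul, hvS, hvl, huaS, b, hba⟩ := hadj
    have hune : u.val ≠ [] := by intro he; rw [he] at hul; simp at hul; omega
    obtain ⟨c₀, t, hu'⟩ := List.exists_cons_of_ne_nil hune
    have h2 : c₀ = b ∧ t ++ [a] = v.val := by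
      rw [hu'] at hba; simpa using hba
    have hvt : v.val = t ++ [a] := h2.2.symm
    have htaS : t ++ [a] ∈ S := by rw [← hvt]; exact hvS
    have hφc : (Equiv.ofBijective φ' ⟨hinj, hsurj⟩ (Quotient.mk _ u)).val = u.val.tail := rfl
    have hφd : (Equiv.ofBijective φ' ⟨hinj, hsurj⟩ (Quotient.mk _ v)).val = v.val.tail := rfl
    rw [hφc, hφd]
    refine ⟨tail_mem hF huS, by rw [List.length_tail, hul], tail_mem hF hvS,
      by rw [List.length_tail, hvl], ?_, ?_⟩
    · rw [hu']; simpa using htaS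
    · rw [hu', hvt]
      cases t with
      | nil => exact ⟨a, rfl⟩
      | cons d₀ t' => exact ⟨d₀, rfl⟩
  · intro h
    obtain ⟨u₀, hu₀⟩ := Quotient.exists_rep c
    obtain ⟨v₀, hv₀⟩ := Quotient.exists_rep d
    set y := (Equiv.ofBijective φ' ⟨hinj, hsurj⟩ c) with hy
    set z := (Equiv.ofBijective φ' ⟨hinj, hsurj⟩ d) with hz
    obtain ⟨hyS, hyl, hzS, hzl, hyaS, b, hba⟩ := h
    obtain ⟨e, b', heb⟩ := hS.1.2 _ hyaS
    have huaS : e :: (y.val ++ [a]) ∈ S := hF _ heb _ ⟨[], [b'], by simp⟩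
    have huS : e :: y.val ∈ S := hF _ huaS _ ⟨[], [a], by simp⟩
    have hyt : y.val = u₀.val.tail := by rw [hy, ← hu₀]; rfl
    have hzt : z.val = v₀.val.tail := by rw [hz, ← hv₀]; rfl
    refine ⟨⟨e :: y.val, huS, by simp [hyl]; omega⟩,
      ⟨y.val ++ [a], hyaS, by simp [hyl]; omega⟩, ?_, ?_, ?_⟩
    · rw [← hu₀]
      exact Quotient.sound (Relation.EqvGen.rel _ _
        (theta_of_tail_eq S hS hn _ _ (by simpa using hyt)))
    · rw [← hv₀]
      refine Quotient.sound (Relation.EqvGen.rel _ _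
        (theta_of_tail_eq S hS hn _ _ ?_))
      show (y.val ++ [a]).tail = v₀.val.tail
      rw [← hzt, hba]; rfl
    · exact ⟨huS, by simp [hyl]; omega, hyaS, by simp [hyl]; omega,
        by simpa using huaS, ⟨e, by simp⟩⟩
end
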